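/- Let X and Y be metric spaces with X complete, Y separable, and let f : X → Y be a continuous open surjection. Then there exists a closed separable subset Z ⊆ X such that f(Z) = Y. -/

import Mathlib

open Filter Topology

theorem stmt1 {X Y : Type*} [MetricSpace X] [MetricSpace Y] [CompleteSpace X]
    [TopologicalSpace.SeparableSpace Y]
    (f : X → Y) (hf : Continuous f) (ho : IsOpenMap f) (hs : Function.Surjective f) :
    ∃ Z : Set X, IsClosed Z ∧ TopologicalSpace.IsSeparable Z ∧ f '' Z = Set.univ := by
  haveI : SecondCountableTopology Y := UniformSpace.secondCountable_of_separable Y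
  -- key covering lemma
  have key : ∀ (x : X) (n : ℕ), ∃ T : Set X, T.Countable ∧ T ⊆ Metric.ball x ((1/2)^n) ∧
      f '' Metric.ball x ((1/2)^n) ⊆ ⋃ x' ∈ T, f '' Metric.ball x' ((1/2)^(n+1)) := by
    intro x n
    obtain ⟨T', hT'c, hT'⟩ := TopologicalSpace.isOpen_iUnion_countable
      (fun i : Metric.ball x ((1/2:ℝ)^n) => f '' Metric.ball (i : X) ((1/2)^(n+1)))
      (fun i => ho _ Metric.isOpen_ball)
    refine ⟨Subtype.val '' T', hT'c.image _, ?_, ?_⟩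
    · rintro _ ⟨i, _, rfl⟩; exact i.2
    · rintro _ ⟨z, hz, rfl⟩
      have hmem : f z ∈ ⋃ i : Metric.ball x ((1/2:ℝ)^n),
          f '' Metric.ball (i : X) ((1/2)^(n+1)) :=
        Set.mem_iUnion.2 ⟨⟨z, hz⟩, ⟨z, Metric.mem_ball_self (by positivity), rfl⟩⟩
      rw [← hT'] at hmem
      obtain ⟨i, hiT, hm⟩ := Set.mem_iUnion₂.1 hmem
      exact Set.mem_iUnion₂.2 ⟨(i : X), ⟨i, hiT, rfl⟩, hm⟩
  choose T hTc hTsub hTcov using key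
  -- base covering
  have base : ∃ T₀ : Set X, T₀.Countable ∧
      ∀ y : Y, ∃ x ∈ T₀, y ∈ f '' Metric.ball x ((1/2)^(0:ℕ)) := by
    obtain ⟨T', hT'c, hT'⟩ := TopologicalSpace.isOpen_iUnion_countable
      (fun x : X => f '' Metric.ball x ((1/2:ℝ)^(0:ℕ)))
      (fun x => ho _ Metric.isOpen_ball)
    refine ⟨T', hT'c, fun y => ?_⟩
    obtain ⟨z, rfl⟩ := hs y
    have hmem : f z ∈ ⋃ x : X, f '' Metric.ball x ((1/2:ℝ)^(0:ℕ)) :=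
      Set.mem_iUnion.2 ⟨z, ⟨z, Metric.mem_ball_self (by norm_num), rfl⟩⟩
    rw [← hT'] at hmem
    obtain ⟨x, hxT, hm⟩ := Set.mem_iUnion₂.1 hmem
    exact ⟨x, hxT, hm⟩
  obtain ⟨T₀, hT₀c, hT₀⟩ := base
  -- build the countable set S
  let g : ℕ → Set X := fun n => Nat.rec T₀ (fun _ s => s ∪ ⋃ x ∈ s, ⋃ m, T x m) n
  have hgsucc : ∀ n, g (n+1) = g n ∪ ⋃ x ∈ g n, ⋃ m, T x m := fun n => rfl
  have hgc : ∀ n, (g n).Countable := by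
    intro n
    induction n with
    | zero => exact hT₀c
    | succ n ih =>
      rw [hgsucc]
      exact ih.union (ih.biUnion fun x _ => Set.countable_iUnion fun m => hTc x m)
  set S := ⋃ n, g n with hS
  have hSc : S.Countable := Set.countable_iUnion hgc
  have hTS : ∀ x ∈ S, ∀ m, T x m ⊆ S := by
    intro x hx m x' hx'
    obtain ⟨n, hn⟩ := Set.mem_iUnion.1 hx
    refine Set.mem_iUnion.2 ⟨n+1, ?_⟩
    rw [hgsucc]
    exact Or.inr (Set.mem_biUnion hn (Set.mem_iUnion.2 ⟨m, hx'⟩))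
  have hT₀S : T₀ ⊆ S := fun x hx => Set.mem_iUnion.2 ⟨0, hx⟩
  refine ⟨closure S, isClosed_closure, hSc.isSeparable.closure, ?_⟩
  refine Set.eq_univ_of_forall fun y => ?_
  -- build the approximating sequence
  have step : ∀ (n : ℕ) (x : X), x ∈ S → y ∈ f '' Metric.ball x ((1/2)^n) →
      ∃ x', (x' ∈ S ∧ y ∈ f '' Metric.ball x' ((1/2)^(n+1))) ∧ dist x' x < (1/2)^n := by
    intro n x hxS hy
    obtain ⟨x', hx'T, hmem⟩ := Set.mem_iUnion₂.1 (hTcov x n hy)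
    exact ⟨x', ⟨hTS x hxS n hx'T, hmem⟩, Metric.mem_ball.1 (hTsub x n hx'T)⟩
  choose! next hnext hdist using step
  obtain ⟨x₀, hx₀T, hy₀⟩ := hT₀ y
  let u : ℕ → X := fun n => Nat.rec x₀ (fun n xn => next n xn) n
  have husucc : ∀ n, u (n+1) = next n (u n) := fun n => rfl
  have hu : ∀ n, u n ∈ S ∧ y ∈ f '' Metric.ball (u n) ((1/2)^n) := by
    intro n
    induction n with
    | zero => exact ⟨hT₀S hx₀T, hy₀⟩
    | succ n ih =>
      rw [husucc]
      exact hnext n (u n) ih.1 ih.2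
  have hd : ∀ n, dist (u n) (u (n+1)) ≤ 1 * (1/2)^n := by
    intro n
    rw [one_mul, dist_comm, husucc]
    exact le_of_lt (hdist n (u n) (hu n).1 (hu n).2)
  have hcauchy : CauchySeq u := cauchySeq_of_le_geometric (1/2) 1 (by norm_num) hd
  obtain ⟨x, hx⟩ := cauchySeq_tendsto_of_complete hcauchy
  have hxcl : x ∈ closure S :=
    mem_closure_of_tendsto hx (Filter.Eventually.of_forall fun n => (hu n).1)
  have h2 : ∀ n : ℕ, ∃ z, z ∈ Metric.ball (u n) ((1/2:ℝ)^n) ∧ f z = y := fun n => (hu n).2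
  choose z hzb hzf using h2
  have hzx : Tendsto z atTop (𝓝 x) := by
    rw [tendsto_iff_dist_tendsto_zero]
    have hbound : ∀ n, dist (z n) x ≤ (1/2)^n + dist (u n) x := fun n =>
      le_trans (dist_triangle (z n) (u n) x)
        (add_le_add_left (le_of_lt (Metric.mem_ball.1 (hzb n))) _)
    have hlim : Tendsto (fun n => ((1/2:ℝ))^n + dist (u n) x) atTop (𝓝 0) := by
      have h1 : Tendsto (fun n : ℕ => ((1/2:ℝ))^n) atTop (𝓝 0) :=
        tendsto_pow_atTop_nhds_zero_of_lt_one (by norm_num) (by norm_num)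
      have h2' : Tendsto (fun n => dist (u n) x) atTop (𝓝 0) :=
        tendsto_iff_dist_tendsto_zero.1 hx
      simpa using h1.add h2'
    exact squeeze_zero (fun n => dist_nonneg) hbound hlim
  have hfz : (fun n => f (z n)) = fun _ => y := funext hzf
  have : Tendsto (fun n => f (z n)) atTop (𝓝 (f x)) := (hf.tendsto x).comp hzx
  rw [hfz] at this
  have hfx : f x = y := (tendsto_nhds_unique this tendsto_const_nhds).symm.symm
  exact ⟨x, hxcl, hfx⟩
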